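/- Let q0 = 2^s, q = 2q0², with s ≥ 1. Suppose B is an additive subgroup of F_q of order 2^v and A is an additive subgroup of F_q of order 2^{u-v} with A^{2q0+1} := {a^{2q0+1} : a ∈ A} ⊆ B. Then there is a subgroup U of the Sylow 2-subgroup T̄ of Sz(q) of order 2^u with {c : ψ_{0,c} ∈ U} = B and image {a : ψ_{a,c} ∈ U for some c} = A. -/

import Mathlib

open scoped Classical

def suzukiPsi {F : Type*} [Field F] (q0 : ℕ) (a c : F) : Equiv.Perm (F × F) where
  toFun p := (p.1 + a, a ^ (2 * q0) * p.1 + p.2 + c)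
  invFun p := (p.1 - a, p.2 - a ^ (2 * q0) * (p.1 - a) - c)
  left_inv p := by
    refine Prod.ext ?_ ?_ <;> dsimp <;> ring
  right_inv p := by
    refine Prod.ext ?_ ?_ <;> dsimp <;> ring

section Aux

variable {F : Type*} [Field F] (q0 : ℕ)

lemma suzukiPsi_apply (a c : F) (p : F × F) :
    suzukiPsi q0 a c p = (p.1 + a, a ^ (2 * q0) * p.1 + p.2 + c) := rfl

lemma suzukiPsi_inj {a c a' c' : F} (h : suzukiPsi q0 a c = suzukiPsi q0 a' c') :
    a = a' ∧ c = c' := by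
  have := congrArg (fun e : Equiv.Perm (F × F) => e (0, 0)) h
  simp only [suzukiPsi_apply, zero_add, mul_zero, add_zero, Prod.mk.injEq] at this
  exact this

lemma suzukiPsi_mul (hfrob : ∀ x y : F, (x + y) ^ (2 * q0) = x ^ (2 * q0) + y ^ (2 * q0))
    (a c a' c' : F) :
    suzukiPsi q0 a c * suzukiPsi q0 a' c'
      = suzukiPsi q0 (a + a') (a ^ (2 * q0) * a' + c + c') := by
  ext p
  · show ((suzukiPsi q0 a c) ((suzukiPsi q0 a' c') p)).1 = _
    simp only [suzukiPsi_apply]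
    ring
  · show ((suzukiPsi q0 a c) ((suzukiPsi q0 a' c') p)).2 = _
    simp only [suzukiPsi_apply, hfrob]
    ring

lemma suzukiPsi_one (hq0 : q0 ≠ 0) : suzukiPsi q0 (0 : F) 0 = 1 := by
  ext p
  · show ((suzukiPsi q0 (0:F) 0) p).1 = p.1
    simp [suzukiPsi_apply]
  · show ((suzukiPsi q0 (0:F) 0) p).2 = p.2
    simp [suzukiPsi_apply, zero_pow (by positivity : 2 * q0 ≠ 0)]

/-- Existence of the "quadratic refinement" f on A. -/
lemma exists_cocycle [Fintype F] (hq0 : q0 ≠ 0)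
    (hfrob : ∀ x y : F, (x + y) ^ (2 * q0) = x ^ (2 * q0) + y ^ (2 * q0))
    (htwo : (2 : F) = 0) (B : AddSubgroup F) :
    ∀ n : ℕ, ∀ A : AddSubgroup F, Nat.card A ≤ n →
      (∀ a ∈ A, ∀ b ∈ A, a ^ (2 * q0) * b + b ^ (2 * q0) * a ∈ B) →
      (∀ a ∈ A, a ^ (2 * q0) * a ∈ B) →
      ∃ f : F → F, f 0 = 0 ∧
        ∀ a ∈ A, ∀ b ∈ A, f (a + b) + f a + f b + a ^ (2 * q0) * b ∈ B := by
  intro n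
  induction n with
  | zero =>
    intro A hcard _ _
    have := Nat.card_pos (α := A)
    omega
  | succ n ih =>
    intro A hcard hcross hself
    by_cases hA : ∀ z ∈ A, z = (0 : F)
    · refine ⟨fun _ => 0, rfl, ?_⟩
      intro a ha b hb
      rw [hA a ha, hA b hb]
      simp [zero_pow (by positivity : 2 * q0 ≠ 0)]
    · push_neg at hA
      obtain ⟨x, hxA, hx0⟩ := hA
      -- maximal subgroup of A avoiding x
      haveI : Finite (AddSubgroup F) := Finite.of_injective _ SetLike.coe_injective
      set S : Set (AddSubgroup F) := {C | C ≤ A ∧ x ∉ C} with hS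
      obtain ⟨A', hA'S, hmax⟩ := Set.Finite.exists_maximalFor id S (Set.toFinite S)
        ⟨⊥, bot_le, by simpa using hx0⟩
      obtain ⟨hA'A, hxA'⟩ := hA'S
      have hxx : x + x = 0 := by linear_combination x * htwo
      -- key : complements
      have hkey : ∀ y ∈ A, y ∉ A' → y + x ∈ A' := by
        intro y hyA hyA'
        have hxC : x ∈ A' ⊔ AddSubgroup.closure {y} := by
          by_contra hxC
          have hCS : A' ⊔ AddSubgroup.closure {y} ∈ S :=
            ⟨sup_le hA'A (by rwa [AddSubgroup.closure_le, Set.singleton_subset_iff]), hxC⟩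
          have : id A' = id (A' ⊔ AddSubgroup.closure {y}) := le_antisymm le_sup_left (hmax hCS le_sup_left)
          simp only [id] at this
          exact hyA' (this ▸ (AddSubgroup.mem_sup_right (AddSubgroup.subset_closure rfl)))
        rw [AddSubgroup.mem_sup] at hxC
        obtain ⟨a, ha, z, hz, hsum⟩ := hxC
        rw [AddSubgroup.mem_closure_singleton] at hz
        obtain ⟨m, hm⟩ := hz
        have hyy : y + y = 0 := by linear_combination y * htwo
        have hdouble : ∀ t : F, t + t = 0 := fun t => by linear_combination t * htwo
        rcases Int.even_or_odd m with ⟨k, hk⟩ | ⟨k, hk⟩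
        · have hz0 : z = 0 := by
            rw [← hm, hk, add_smul]; exact hdouble _
          rw [hz0, add_zero] at hsum
          exact absurd (hsum ▸ ha) hxA'
        · have h2k : (2 * k) • y = 0 := by
            rw [mul_smul, two_smul]; exact hdouble _
          have hzy : z = y := by
            rw [← hm, hk, add_smul, one_smul, h2k, zero_add]
          have : y + x = a := by rw [← hsum, hzy]; linear_combination y * htwo
          exact this ▸ ha
      -- strict inclusion, card drop
      have hlt : Nat.card A' < Nat.card A := by
        have e1 : Nat.card A' = (A' : Set F).ncard := Nat.card_coe_set_eq _
        have e2 : Nat.card A = (A : Set F).ncard := Nat.card_coe_set_eq _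
        rw [e1, e2]
        exact Set.ncard_lt_ncard ⟨hA'A, fun h => hxA' (h hxA)⟩ (Set.toFinite _)
      obtain ⟨f', hf'0, hf'⟩ := ih A' (by omega)
        (fun a ha b hb => hcross a (hA'A ha) b (hA'A hb))
        (fun a ha => hself a (hA'A ha))
      refine ⟨fun z => if z ∈ A' then f' z else f' (z + x) + (z + x) ^ (2 * q0) * x, ?_, ?_⟩
      · simp only [if_pos A'.zero_mem, hf'0]
      · intro a ha b hb
        by_cases ha' : a ∈ A' <;> by_cases hb' : b ∈ A'
        · have hab : a + b ∈ A' := A'.add_mem ha' hb'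
          simp only [if_pos hab, if_pos ha', if_pos hb']
          exact hf' a ha' b hb'
        · have hab : a + b ∉ A' := by
            intro h
            exact hb' (by have := A'.add_mem ha' h
                          have hba : a + (a + b) = b := by linear_combination a * htwo
                          exact hba ▸ this)
          have hbx : b + x ∈ A' := hkey b hb hb'
          simp only [if_pos ha', if_neg hb', if_neg hab]
          have H := hf' a ha' (b + x) hbx
          have heq : f' (a + b + x) + (a + b + x) ^ (2 * q0) * x + f' a
              + (f' (b + x) + (b + x) ^ (2 * q0) * x) + a ^ (2 * q0) * b
              = f' (a + (b + x)) + f' a + f' (b + x) + a ^ (2 * q0) * (b + x) := by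
            rw [show a + b + x = a + (b + x) by ring]
            simp only [hfrob]
            linear_combination ((b ^ (2*q0) + x ^ (2*q0)) * x) * htwo
          rw [heq]
          exact H
        · have hab : a + b ∉ A' := by
            intro h
            exact ha' (by have := A'.add_mem h hb'
                          have hba : a + b + b = a := by linear_combination b * htwo
                          exact hba ▸ this)
          have hax : a + x ∈ A' := hkey a ha ha'
          simp only [if_pos hb', if_neg ha', if_neg hab]
          have H := hf' (a + x) hax b hb'
          have C := hcross b (hA'A hb') x hxA
          have heq : f' (a + b + x) + (a + b + x) ^ (2 * q0) * x
              + (f' (a + x) + (a + x) ^ (2 * q0) * x) + f' b + a ^ (2 * q0) * b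
              = (f' (a + x + b) + f' (a + x) + f' b + (a + x) ^ (2 * q0) * b)
                + (b ^ (2 * q0) * x + x ^ (2 * q0) * b) := by
            rw [show a + b + x = a + x + b by ring]
            simp only [hfrob]
            linear_combination (a ^ (2*q0) * x + x ^ (2*q0) * x - x ^ (2*q0) * b) * htwo
          rw [heq]
          exact B.add_mem H C
        · have hax : a + x ∈ A' := hkey a ha ha'
          have hbx : b + x ∈ A' := hkey b hb hb'
          have hab : a + b ∈ A' := by
            have := A'.add_mem hax hbx
            have heq : a + x + (b + x) = a + b := by linear_combination x * htwo
            exact heq ▸ this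
          simp only [if_pos hab, if_neg ha', if_neg hb']
          have H := hf' (a + x) hax (b + x) hbx
          have hrw : a + x + (b + x) = a + b := by linear_combination x * htwo
          rw [hrw] at H
          have C := hcross b hb x hxA
          have Sx := hself x hxA
          have heq : f' (a + b) + (f' (a + x) + (a + x) ^ (2 * q0) * x)
              + (f' (b + x) + (b + x) ^ (2 * q0) * x) + a ^ (2 * q0) * b
              = (f' (a + b) + f' (a + x) + f' (b + x) + (a + x) ^ (2 * q0) * (b + x))
                + (b ^ (2 * q0) * x + x ^ (2 * q0) * b) + x ^ (2 * q0) * x := by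
            simp only [hfrob]
            linear_combination (-(x ^ (2*q0) * b)) * htwo
          rw [heq]
          exact B.add_mem (B.add_mem H C) Sx
  
end Aux

/-- If `B, A` are additive subgroups of `F_q` of orders `2^v`, `2^{u-v}`
with `A^{2q₀+1} ⊆ B`, then there is a subgroup `U` of the Sylow 2-subgroup `T̄` of `Sz(q)`
of order `2^u` with `{c : ψ_{0,c} ∈ U} = B` and image `{a : ∃ c, ψ_{a,c} ∈ U} = A`. -/
theorem stmt_17 (s : ℕ) (hs : 1 ≤ s) (q0 q : ℕ) (hq0 : q0 = 2 ^ s) (hq : q = 2 * q0 ^ 2)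
    (F : Type*) [Field F] [Fintype F] (hF : Fintype.card F = q)
    (u v : ℕ) (hvu : v ≤ u)
    (B A : AddSubgroup F)
    (hB : Nat.card B = 2 ^ v) (hA : Nat.card A = 2 ^ (u - v))
    (hAB : ∀ a ∈ A, a ^ (2 * q0 + 1) ∈ B) :
    ∃ U : Subgroup (Equiv.Perm (F × F)),
      (∀ g ∈ U, ∃ a c : F, g = suzukiPsi q0 a c) ∧
      Nat.card U = 2 ^ u ∧
      (∀ c : F, suzukiPsi q0 0 c ∈ U ↔ c ∈ B) ∧
      (∀ a : F, (∃ c : F, suzukiPsi q0 a c ∈ U) ↔ a ∈ A) := by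
  have hq0ne : q0 ≠ 0 := by rw [hq0]; positivity
  -- characteristic 2
  have hcardF : Fintype.card F = 2 ^ (2 * s + 1) := by
    rw [hF, hq, hq0]; ring
  haveI hchar : CharP F 2 := by
    obtain ⟨p, hc⟩ := CharP.exists F
    haveI := hc
    haveI hpf : Fact (Nat.Prime p) := ⟨CharP.char_is_prime F p⟩
    obtain ⟨n, hpp, hn⟩ := FiniteField.card F p
    have hp2 : p = 2 := by
      have hdvd : p ∣ 2 ^ (2 * s + 1) := by
        rw [← hcardF, hn]
        exact dvd_pow_self p (by exact_mod_cast n.2.ne')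
      have := Nat.Prime.dvd_of_dvd_pow hpf.1 hdvd
      exact (Nat.prime_dvd_prime_iff_eq hpf.1 Nat.prime_two).mp this
    rwa [hp2] at hc
  haveI : Fact (Nat.Prime 2) := ⟨Nat.prime_two⟩
  have htwo : (2 : F) = 0 := by
    have := CharP.cast_eq_zero F 2
    exact_mod_cast this
  have hfrob : ∀ x y : F, (x + y) ^ (2 * q0) = x ^ (2 * q0) + y ^ (2 * q0) := by
    intro x y
    have h2q0 : 2 * q0 = 2 ^ (s + 1) := by rw [hq0, pow_succ, mul_comm]
    rw [h2q0]
    exact add_pow_char_pow x y 2 (s + 1)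
  -- the cocycle
  obtain ⟨f, hf0, hf⟩ := exists_cocycle q0 hq0ne hfrob htwo B (Nat.card A) A le_rfl
    (by
      intro a ha b hb
      have h1 := hAB (a + b) (A.add_mem ha hb)
      have h2 := hAB a ha
      have h3 := hAB b hb
      have heq : a ^ (2 * q0) * b + b ^ (2 * q0) * a
          = (a + b) ^ (2 * q0 + 1) - a ^ (2 * q0 + 1) - b ^ (2 * q0 + 1) := by
        rw [pow_succ, pow_succ, pow_succ, hfrob]
        ring
      rw [heq]
      exact B.sub_mem (B.sub_mem h1 h2) h3)
    (by
      intro a ha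
      have := hAB a ha
      rwa [pow_succ] at this)
  -- the subgroup
  have hdouble : ∀ t : F, t + t = 0 := fun t => by linear_combination t * htwo
  refine ⟨{
    carrier := {g | ∃ a c : F, a ∈ A ∧ c + f a ∈ B ∧ g = suzukiPsi q0 a c}
    one_mem' := by
      refine ⟨0, 0, A.zero_mem, ?_, (suzukiPsi_one q0 hq0ne).symm⟩
      rw [hf0, add_zero]; exact B.zero_mem
    mul_mem' := by
      rintro g g' ⟨a, c, ha, hc, rfl⟩ ⟨a', c', ha', hc', rfl⟩
      refine ⟨a + a', a ^ (2 * q0) * a' + c + c', A.add_mem ha ha', ?_,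
        suzukiPsi_mul q0 hfrob a c a' c'⟩
      have key := hf a ha a' ha'
      have heq : a ^ (2 * q0) * a' + c + c' + f (a + a')
          = (f (a + a') + f a + f a' + a ^ (2 * q0) * a') + (c + f a) + (c' + f a') := by
        linear_combination (-(f a + f a')) * htwo
      rw [heq]
      exact B.add_mem (B.add_mem key hc) hc'
    inv_mem' := by
      rintro g ⟨a, c, ha, hc, rfl⟩
      have hinv : (suzukiPsi q0 a c)⁻¹ = suzukiPsi q0 a (a ^ (2 * q0) * a + c) := by
        apply inv_eq_of_mul_eq_one_right
        rw [suzukiPsi_mul q0 hfrob]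
        have e1 : a + a = 0 := hdouble a
        have e2 : a ^ (2 * q0) * a + c + (a ^ (2 * q0) * a + c) = 0 := hdouble _
        rw [e1, e2, suzukiPsi_one q0 hq0ne]
      refine ⟨a, a ^ (2 * q0) * a + c, ha, ?_, hinv⟩
      have hself : a ^ (2 * q0) * a ∈ B := by
        have := hAB a ha; rwa [pow_succ] at this
      have heq : a ^ (2 * q0) * a + c + f a = (a ^ (2 * q0) * a) + (c + f a) := by ring
      rw [heq]
      exact B.add_mem hself hc }, ?_, ?_, ?_, ?_⟩
  · rintro g ⟨a, c, _, _, rfl⟩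
    exact ⟨a, c, rfl⟩
  · -- cardinality
    have hbij : Function.Bijective (fun p : A × B =>
        (⟨suzukiPsi q0 p.1 (f p.1 + p.2), p.1, f p.1 + p.2, p.1.2, by
            have : (f p.1 + p.2 : F) + f p.1 = p.2 := by linear_combination (f (p.1:F)) * htwo
            rw [this]; exact p.2.2, rfl⟩ :
          {g : Equiv.Perm (F × F) // ∃ a c : F, a ∈ A ∧ c + f a ∈ B ∧ g = suzukiPsi q0 a c})) := by
      constructor
      · rintro ⟨a, b⟩ ⟨a', b'⟩ hgg
        have := suzukiPsi_inj q0 (Subtype.ext_iff.mp hgg)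
        have ha : (a : F) = a' := this.1
        have hb : (b : F) = b' := by
          have := this.2
          rw [ha] at this
          exact add_left_cancel this
        exact Prod.ext (Subtype.ext ha) (Subtype.ext hb)
      · rintro ⟨g, a, c, ha, hc, rfl⟩
        refine ⟨(⟨a, ha⟩, ⟨c + f a, hc⟩), ?_⟩
        apply Subtype.ext
        show suzukiPsi q0 a (f a + (c + f a)) = suzukiPsi q0 a c
        congr 1
        linear_combination (f a) * htwo
    have := Nat.card_eq_of_bijective _ hbij
    rw [Nat.card_prod, hA, hB] at this
    have : Nat.card {g : Equiv.Perm (F × F) // ∃ a c : F, a ∈ A ∧ c + f a ∈ B ∧ g = suzukiPsi q0 a c}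
        = 2 ^ u := by
      rw [← this, ← pow_add, Nat.sub_add_cancel hvu]
    exact this
  · intro c
    constructor
    · rintro ⟨a, c', ha, hc', heq⟩
      obtain ⟨h1, h2⟩ := suzukiPsi_inj q0 heq
      rw [← h1, ← h2, hf0, add_zero] at hc'
      exact hc'
    · intro hc
      exact ⟨0, c, A.zero_mem, by rw [hf0, add_zero]; exact hc, rfl⟩
  · intro a
    constructor
    · rintro ⟨c, a', c', ha', hc', heq⟩
      obtain ⟨h1, _⟩ := suzukiPsi_inj q0 heq
      rwa [← h1] at ha'
    · intro ha
      exact ⟨f a, a, f a, ha, by rw [hdouble (f a)]; exact B.zero_mem, rfl⟩
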